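/- Let φ(x) = c·x^{−1/a} on I = (0,∞) with a > 0, c > 0. Then for every N ≥ 1, p, v ∈ (0,∞)^N, x ∈ (0,∞)^N, the function g(s) = φ⁻¹(Σ_n p_n φ(x_n + v_n s)), defined for s in a neighborhood of 0 with x_n + v_n s > 0 for all n, is concave in s. -/

import Mathlib

open Finset Real

private lemma aux_combo_pos {t1 t2 A B : ℝ} (ht1 : 0 ≤ t1) (ht2 : 0 ≤ t2)
    (ht : t1 + t2 = 1) (hA : 0 < A) (hB : 0 < B) : 0 < t1 * A + t2 * B := by
  rcases ht1.lt_or_eq with h | h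
  · exact add_pos_of_pos_of_nonneg (mul_pos h hA) (mul_nonneg ht2 hB.le)
  · rw [← h, zero_mul, zero_add]
    have ht2' : t2 = 1 := by linarith
    rw [ht2', one_mul]; exact hB

/-- convexity inequality for `x ↦ x ^ e` with `e ≤ 0` on positive reals. -/
private lemma aux_rpow_convex {e α β z1 z2 : ℝ} (he : e ≤ 0) (hα : 0 ≤ α) (hβ : 0 ≤ β)
    (hαβ : α + β = 1) (hz1 : 0 < z1) (hz2 : 0 < z2) :
    (α * z1 + β * z2) ^ e ≤ α * z1 ^ e + β * z2 ^ e := by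
  have h1 : z1 ^ α * z2 ^ β ≤ α * z1 + β * z2 :=
    Real.geom_mean_le_arith_mean2_weighted hα hβ hz1.le hz2.le hαβ
  have h2 : (α * z1 + β * z2) ^ e ≤ (z1 ^ α * z2 ^ β) ^ e :=
    Real.rpow_le_rpow_of_nonpos (by positivity) h1 he
  have h3 : (z1 ^ α * z2 ^ β) ^ e = (z1 ^ e) ^ α * (z2 ^ e) ^ β := by
    rw [Real.mul_rpow (by positivity) (by positivity), ← Real.rpow_mul hz1.le,
      ← Real.rpow_mul hz2.le, mul_comm α e, mul_comm β e, Real.rpow_mul hz1.le,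
      Real.rpow_mul hz2.le]
  have h4 : (z1 ^ e) ^ α * (z2 ^ e) ^ β ≤ α * z1 ^ e + β * z2 ^ e :=
    Real.geom_mean_le_arith_mean2_weighted hα hβ (Real.rpow_pos_of_pos hz1 e).le
      (Real.rpow_pos_of_pos hz2 e).le hαβ
  linarith

/-- concavity of the quasi-arithmetic composite for CRRA marginal utility
φ(x) = c·x^(−1/a), a > 0. -/
theorem crra_g_concave (a c : ℝ) (ha : 0 < a) (hc : 0 < c)
    (N : ℕ) (hN : 0 < N) (p v x : Fin N → ℝ)
    (hp : ∀ n, 0 < p n) (hv : ∀ n, 0 < v n) (hx : ∀ n, 0 < x n) :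
    ConcaveOn ℝ {s : ℝ | ∀ n, 0 < x n + v n * s}
      (fun s => ((∑ n, p n * (c * (x n + v n * s) ^ (-1/a))) / c) ^ (-a)) := by
  have hc' : c ≠ 0 := hc.ne'
  have ha' : a ≠ 0 := ha.ne'
  have hNne : Nonempty (Fin N) := Fin.pos_iff_nonempty.1 hN
  have he : (-1/a : ℝ) ≤ 0 := by
    rw [neg_div]; exact neg_nonpos_of_nonneg (by positivity)
  -- simplify the function: the c's cancel
  have hfun : ∀ s : ℝ, ((∑ n, p n * (c * (x n + v n * s) ^ (-1/a))) / c) ^ (-a)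
      = (∑ n, p n * (x n + v n * s) ^ (-1/a)) ^ (-a) := by
    intro s
    congr 1
    have : (∑ n, p n * (c * (x n + v n * s) ^ (-1/a)))
        = c * ∑ n, p n * (x n + v n * s) ^ (-1/a) := by
      rw [Finset.mul_sum]
      exact Finset.sum_congr rfl fun n _ => by ring
    rw [this, mul_div_cancel_left₀ _ hc']
  simp only [hfun]
  constructor
  · -- convexity of the domain
    intro s1 hs1 s2 hs2 t1 t2 ht1 ht2 ht n
    simp only [Set.mem_setOf_eq] at hs1 hs2 ⊢
    have h1 := hs1 n
    have h2 := hs2 n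
    have heq : x n + v n * (t1 • s1 + t2 • s2)
        = t1 * (x n + v n * s1) + t2 * (x n + v n * s2) := by
      simp only [smul_eq_mul]; linear_combination (-(x n)) * ht
    rw [heq]
    exact aux_combo_pos ht1 ht2 ht h1 h2
  · intro s1 hs1 s2 hs2 t1 t2 ht1 ht2 ht
    simp only [Set.mem_setOf_eq] at hs1 hs2
    simp only [smul_eq_mul]
    set Q1 : ℝ := ∑ n, p n * (x n + v n * s1) ^ (-1/a) with hQ1def
    set Q2 : ℝ := ∑ n, p n * (x n + v n * s2) ^ (-1/a) with hQ2def
    have hQ1 : 0 < Q1 :=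
      Finset.sum_pos (fun n _ => mul_pos (hp n) (Real.rpow_pos_of_pos (hs1 n) _))
        Finset.univ_nonempty
    have hQ2 : 0 < Q2 :=
      Finset.sum_pos (fun n _ => mul_pos (hp n) (Real.rpow_pos_of_pos (hs2 n) _))
        Finset.univ_nonempty
    set A : ℝ := Q1 ^ (-a) with hAdef
    set B : ℝ := Q2 ^ (-a) with hBdef
    have hA : 0 < A := Real.rpow_pos_of_pos hQ1 _
    have hB : 0 < B := Real.rpow_pos_of_pos hQ2 _
    set D : ℝ := t1 * A + t2 * B with hDdef
    have hD : 0 < D := aux_combo_pos ht1 ht2 ht hA hB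
    have hmul : (-a) * (-1/a) = 1 := by field_simp
    have hAe : A ^ (-1/a) = Q1 := by
      rw [hAdef, ← Real.rpow_mul hQ1.le, hmul, Real.rpow_one]
    have hBe : B ^ (-1/a) = Q2 := by
      rw [hBdef, ← Real.rpow_mul hQ2.le, hmul, Real.rpow_one]
    set α : ℝ := t1 * A / D with hαdef
    set β : ℝ := t2 * B / D with hβdef
    have hα : 0 ≤ α := by positivity
    have hβ : 0 ≤ β := by positivity
    have hαβ : α + β = 1 := by
      rw [hαdef, hβdef, ← add_div, hDdef, div_self hD.ne']
    -- pointwise key inequality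
    have key : ∀ n : Fin N, (x n + v n * (t1 * s1 + t2 * s2)) ^ (-1/a)
        ≤ D ^ (-1/a) * (α * ((x n + v n * s1) ^ (-1/a) / Q1)
          + β * ((x n + v n * s2) ^ (-1/a) / Q2)) := by
      intro n
      set y1 : ℝ := x n + v n * s1 with hy1def
      set y2 : ℝ := x n + v n * s2 with hy2def
      have hy1 : 0 < y1 := hs1 n
      have hy2 : 0 < y2 := hs2 n
      have hz1 : 0 < y1 / A := by positivity
      have hz2 : 0 < y2 / B := by positivity
      have hcombo : D * (α * (y1 / A) + β * (y2 / B)) = t1 * y1 + t2 * y2 := by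
        rw [hαdef, hβdef]
        field_simp
      have hsplit : x n + v n * (t1 * s1 + t2 * s2) = D * (α * (y1 / A) + β * (y2 / B)) := by
        rw [hcombo, hy1def, hy2def]
        linear_combination (-(x n)) * ht
      rw [hsplit, Real.mul_rpow hD.le (by positivity)]
      have step := aux_rpow_convex he hα hβ hαβ hz1 hz2
      have hz1e : (y1 / A) ^ (-1/a) = y1 ^ (-1/a) / Q1 := by
        rw [Real.div_rpow hy1.le hA.le, hAe]
      have hz2e : (y2 / B) ^ (-1/a) = y2 ^ (-1/a) / Q2 := by
        rw [Real.div_rpow hy2.le hB.le, hBe]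
      rw [hz1e, hz2e] at step
      exact mul_le_mul_of_nonneg_left step (Real.rpow_nonneg hD.le _)
    -- sum the pointwise inequalities
    have hsum : (∑ n, p n * (x n + v n * (t1 * s1 + t2 * s2)) ^ (-1/a)) ≤ D ^ (-1/a) := by
      calc (∑ n, p n * (x n + v n * (t1 * s1 + t2 * s2)) ^ (-1/a))
          ≤ ∑ n, p n * (D ^ (-1/a) * (α * ((x n + v n * s1) ^ (-1/a) / Q1)
              + β * ((x n + v n * s2) ^ (-1/a) / Q2))) :=
            Finset.sum_le_sum fun n _ => mul_le_mul_of_nonneg_left (key n) (hp n).le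
        _ = ∑ n, ((D ^ (-1/a) * (α / Q1)) * (p n * (x n + v n * s1) ^ (-1/a))
              + (D ^ (-1/a) * (β / Q2)) * (p n * (x n + v n * s2) ^ (-1/a))) :=
            Finset.sum_congr rfl fun n _ => by ring
        _ = D ^ (-1/a) * (α / Q1) * Q1 + D ^ (-1/a) * (β / Q2) * Q2 := by
            rw [Finset.sum_add_distrib, ← Finset.mul_sum, ← Finset.mul_sum, ← hQ1def, ← hQ2def]
        _ = D ^ (-1/a) := by
            rw [mul_assoc (D ^ (-1/a)), div_mul_cancel₀ α hQ1.ne',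
              mul_assoc (D ^ (-1/a)), div_mul_cancel₀ β hQ2.ne', ← mul_add, hαβ, mul_one]
    -- conclude by antitonicity of x ↦ x ^ (-a)
    have hQs : 0 < ∑ n, p n * (x n + v n * (t1 * s1 + t2 * s2)) ^ (-1/a) := by
      refine Finset.sum_pos (fun n _ => mul_pos (hp n) (Real.rpow_pos_of_pos ?_ _))
        Finset.univ_nonempty
      have heq : x n + v n * (t1 * s1 + t2 * s2)
          = t1 * (x n + v n * s1) + t2 * (x n + v n * s2) := by
        linear_combination (-(x n)) * ht
      rw [heq]; exact aux_combo_pos ht1 ht2 ht (hs1 n) (hs2 n)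
    have final := Real.rpow_le_rpow_of_nonpos hQs hsum (neg_nonpos_of_nonneg ha.le)
    have hDe : (D ^ (-1/a)) ^ (-a) = D := by
      rw [← Real.rpow_mul hD.le]
      have : (-1/a) * (-a) = 1 := by field_simp
      rw [this, Real.rpow_one]
    rw [hDe] at final
    exact final
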